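/- For l = n + 2 > 2, the characteristic contact connection ∇^c = ∇^g + ½·μ∧dμ of the Sasakian Stiefel manifold V_{l,2} = SO(l)/SO(n) coincides with the invariant canonical connection of the reductive homogeneous space SO(l)/SO(n); moreover ∇^c is complete and its holonomy group is SO(n). -/
import Mathlib


noncomputable section

open Matrix

/-!
The Stiefel manifold `V_{l,2} = SO(l)/SO(n)`, `l = n + 2`, is the unit tangent
sphere bundle of the round sphere `S^{l−1}` of curvature `1`, with the Sasaki
metric.  Write `𝔰𝔬(l) = 𝔥 ⊕ 𝔪` with `𝔥 = 𝔰𝔬(n)` embedded in the top-left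
block and `𝔪` its reductive complement of matrices vanishing on the `𝔥`
block.  With `E_{ij} = D_{ij} − D_{ji}`, the vectors `e₀ = E_{m,l}`,
`e_i = E_{i,l}`, `e_{i+n} = E_{i,m}` (`1 ≤ i ≤ n`, `m = l − 1`) form a basis
of `𝔪`, orthonormal for the invariant metric `⟨A,B⟩ = ½tr(AᵀB)`, which
corresponds to the Sasaki metric; `μ = e⁰` is the canonical contact-type
1-form of the tangent sphere bundle and `dμ = Σ_{i=1}^n e^{i+n} ∧ e^i`.
-/

/-- the reductive complement `𝔪` of `𝔰𝔬(n)` in `𝔰𝔬(l)`, `l = n+2`: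
skew-symmetric matrices vanishing on the top-left `n×n` block -/
def stiefelM (n : ℕ) : Set (Matrix (Fin (n+2)) (Fin (n+2)) ℝ) :=
  {A | Aᵀ = -A ∧ ∀ i j : Fin (n+2), (i : ℕ) < n → (j : ℕ) < n → A i j = 0}

/-- the invariant inner product on `𝔰𝔬(l)` making the canonical basis
`E_{ij}` (`i < j`) orthonormal -/
def stiefelInner (n : ℕ) (A B : Matrix (Fin (n+2)) (Fin (n+2)) ℝ) : ℝ :=
  (1/2) * Matrix.trace (Aᵀ * B)

/-- the canonical 1-form `μ = e⁰` in the invariant frame: the coefficient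
along `e₀ = E_{m,l}` -/
def stiefelMu (n : ℕ) (A : Matrix (Fin (n+2)) (Fin (n+2)) ℝ) : ℝ :=
  A ⟨n, by omega⟩ ⟨n + 1, by omega⟩

/-- the 2-form `dμ = Σ_{i=1}^n e^{i+n} ∧ e^i` in the invariant frame -/
def stiefelDmu (n : ℕ) (A B : Matrix (Fin (n+2)) (Fin (n+2)) ℝ) : ℝ :=
  ∑ i : Fin n,
    (A (Fin.castLE (by omega) i) ⟨n, by omega⟩
        * B (Fin.castLE (by omega) i) ⟨n + 1, by omega⟩
      - B (Fin.castLE (by omega) i) ⟨n, by omega⟩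
        * A (Fin.castLE (by omega) i) ⟨n + 1, by omega⟩)

/-- the torsion 3-form `μ ∧ dμ` of the characteristic contact connection,
evaluated on a triple of tangent vectors -/
def stiefelMuDmu (n : ℕ) (A B C : Matrix (Fin (n+2)) (Fin (n+2)) ℝ) : ℝ :=
  stiefelMu n A * stiefelDmu n B C - stiefelMu n B * stiefelDmu n A C
    + stiefelMu n C * stiefelDmu n A B

/-- projection of `𝔰𝔬(l)` onto the reductive complement `𝔪` (kills the
top-left `𝔥 = 𝔰𝔬(n)` block) -/
def stiefelProjM (n : ℕ) (A : Matrix (Fin (n+2)) (Fin (n+2)) ℝ) :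
    Matrix (Fin (n+2)) (Fin (n+2)) ℝ :=
  Matrix.of fun i j => if (i : ℕ) < n ∧ (j : ℕ) < n then 0 else A i j

/-- the elements of `𝔪`, as a type -/
abbrev StiefelMsub (n : ℕ) := {A : Matrix (Fin (n+2)) (Fin (n+2)) ℝ // A ∈ stiefelM n}

/-- the block-diagonal embedding `SO(n) ⊂ SO(l)`, `h ↦ diag(h, 1)` -/
def stiefelEmbedSO (n : ℕ) (h : Matrix (Fin n) (Fin n) ℝ) :
    Matrix (Fin (n+2)) (Fin (n+2)) ℝ :=
  Matrix.reindex finSumFinEquiv finSumFinEquiv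
    (Matrix.fromBlocks h 0 0 (1 : Matrix (Fin 2) (Fin 2) ℝ))

/-- the group `SO(n)`, acting on `𝔰𝔬(l)` (hence on `𝔪`) by conjugation through
the embedding `SO(n) ⊂ SO(l)`: the holonomy group of the canonical connection
of the reductive homogeneous space `SO(l)/SO(n)` -/
def stiefelSOnAction (n : ℕ) :
    Set (Matrix (Fin (n+2)) (Fin (n+2)) ℝ → Matrix (Fin (n+2)) (Fin (n+2)) ℝ) :=
  {f | ∃ h : Matrix (Fin n) (Fin n) ℝ,
      h ∈ Matrix.orthogonalGroup (Fin n) ℝ ∧ h.det = 1 ∧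
      f = fun A => stiefelEmbedSO n h * A * (stiefelEmbedSO n h)ᵀ}


/-! ### Auxiliary lemmas -/

private lemma stiefel_sum_split (n : ℕ) (f : Fin (n+2) → ℝ) :
    ∑ i, f i = (∑ i : Fin n, f (Fin.castLE (by omega) i))
      + f ⟨n, by omega⟩ + f ⟨n+1, by omega⟩ := by
  rw [Fin.sum_univ_castSucc, Fin.sum_univ_castSucc]; rfl

private lemma stiefel_mem_skew {n : ℕ} {A : Matrix (Fin (n+2)) (Fin (n+2)) ℝ}
    (h : A ∈ stiefelM n) (i j : Fin (n+2)) : A j i = - A i j := by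
  have := congrFun (congrFun h.1 i) j
  simpa [Matrix.transpose_apply] using this

private lemma stiefel_trace_eq_mudmu {n : ℕ} {X Y Z : Matrix (Fin (n+2)) (Fin (n+2)) ℝ}
    (hX : X ∈ stiefelM n) (hY : Y ∈ stiefelM n) (hZ : Z ∈ stiefelM n) :
    Matrix.trace (X * Y * Z) = stiefelMuDmu n X Y Z := by
  have hXs : ∀ i j : Fin n, X (Fin.castLE (by omega) i) (Fin.castLE (by omega) j) = 0 :=
    fun i j => hX.2 _ _ (by simp) (by simp)
  have hYs : ∀ i j : Fin n, Y (Fin.castLE (by omega) i) (Fin.castLE (by omega) j) = 0 :=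
    fun i j => hY.2 _ _ (by simp) (by simp)
  have hZs : ∀ i j : Fin n, Z (Fin.castLE (by omega) i) (Fin.castLE (by omega) j) = 0 :=
    fun i j => hZ.2 _ _ (by simp) (by simp)
  have hXd : ∀ i : Fin (n+2), X i i = 0 := fun i => by
    have := stiefel_mem_skew hX i i; linarith
  have hYd : ∀ i : Fin (n+2), Y i i = 0 := fun i => by
    have := stiefel_mem_skew hY i i; linarith
  have hZd : ∀ i : Fin (n+2), Z i i = 0 := fun i => by
    have := stiefel_mem_skew hZ i i; linarith
  have expand : Matrix.trace (X * Y * Z)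
      = ∑ i : Fin (n+2), ∑ k : Fin (n+2), ∑ j : Fin (n+2), X i j * Y j k * Z k i := by
    simp [Matrix.trace, Matrix.mul_apply, Matrix.diag, Finset.sum_mul]
  rw [expand]
  rw [stiefel_sum_split n, stiefelMuDmu, stiefelMu, stiefelDmu, stiefelDmu, stiefelDmu]
  simp only [stiefel_sum_split n, hXs, hYs, hZs, hXd, hYd, hZd, zero_mul, mul_zero,
    Finset.sum_const_zero, add_zero, zero_add]
  have hXw1 : ∀ i : Fin n, X ⟨n, by omega⟩ (Fin.castLE (by omega) i) = - X (Fin.castLE (by omega) i) ⟨n, by omega⟩ := fun i => stiefel_mem_skew hX _ _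
  have hXw2 : ∀ i : Fin n, X ⟨n+1, by omega⟩ (Fin.castLE (by omega) i) = - X (Fin.castLE (by omega) i) ⟨n+1, by omega⟩ := fun i => stiefel_mem_skew hX _ _
  have hXw3 : X ⟨n+1, by omega⟩ ⟨n, by omega⟩ = - X ⟨n, by omega⟩ ⟨n+1, by omega⟩ := stiefel_mem_skew hX _ _
  have hYw1 : ∀ i : Fin n, Y ⟨n, by omega⟩ (Fin.castLE (by omega) i) = - Y (Fin.castLE (by omega) i) ⟨n, by omega⟩ := fun i => stiefel_mem_skew hY _ _
  have hYw2 : ∀ i : Fin n, Y ⟨n+1, by omega⟩ (Fin.castLE (by omega) i) = - Y (Fin.castLE (by omega) i) ⟨n+1, by omega⟩ := fun i => stiefel_mem_skew hY _ _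
  have hYw3 : Y ⟨n+1, by omega⟩ ⟨n, by omega⟩ = - Y ⟨n, by omega⟩ ⟨n+1, by omega⟩ := stiefel_mem_skew hY _ _
  have hZw1 : ∀ i : Fin n, Z ⟨n, by omega⟩ (Fin.castLE (by omega) i) = - Z (Fin.castLE (by omega) i) ⟨n, by omega⟩ := fun i => stiefel_mem_skew hZ _ _
  have hZw2 : ∀ i : Fin n, Z ⟨n+1, by omega⟩ (Fin.castLE (by omega) i) = - Z (Fin.castLE (by omega) i) ⟨n+1, by omega⟩ := fun i => stiefel_mem_skew hZ _ _
  have hZw3 : Z ⟨n+1, by omega⟩ ⟨n, by omega⟩ = - Z ⟨n, by omega⟩ ⟨n+1, by omega⟩ := stiefel_mem_skew hZ _ _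
  simp only [hXw1, hXw2, hXw3, hYw1, hYw2, hYw3, hZw1, hZw2, hZw3, stiefelMu,
    Finset.mul_sum, ← Finset.sum_sub_distrib, ← Finset.sum_add_distrib]
  exact Finset.sum_congr rfl fun i _ => by ring

private lemma stiefel_dmu_swap (n : ℕ) (A B : Matrix (Fin (n+2)) (Fin (n+2)) ℝ) :
    stiefelDmu n A B = - stiefelDmu n B A := by
  simp only [stiefelDmu, ← Finset.sum_neg_distrib]
  exact Finset.sum_congr rfl fun i _ => by ring

private lemma stiefel_proj_inner {n : ℕ} (A : Matrix (Fin (n+2)) (Fin (n+2)) ℝ)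
    {Z : Matrix (Fin (n+2)) (Fin (n+2)) ℝ} (hZ : Z ∈ stiefelM n) :
    stiefelInner n (stiefelProjM n A) Z = stiefelInner n A Z := by
  simp only [stiefelInner, Matrix.trace, Matrix.diag_apply, Matrix.mul_apply,
    Matrix.transpose_apply, stiefelProjM, Matrix.of_apply]
  congr 1
  refine Finset.sum_congr rfl fun i _ => Finset.sum_congr rfl fun j _ => ?_
  by_cases h : (j : ℕ) < n ∧ (i : ℕ) < n
  · simp [h, hZ.2 j i h.1 h.2]
  · simp [h]

private lemma stiefel_inner_bracket {n : ℕ} {A B : Matrix (Fin (n+2)) (Fin (n+2)) ℝ}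
    (hA : A ∈ stiefelM n) (hB : B ∈ stiefelM n)
    (C : Matrix (Fin (n+2)) (Fin (n+2)) ℝ) :
    stiefelInner n (A * B - B * A) C
      = (1/2) * (Matrix.trace (B * A * C) - Matrix.trace (A * B * C)) := by
  simp only [stiefelInner, Matrix.transpose_sub, Matrix.transpose_mul, hA.1, hB.1,
    Matrix.neg_mul, Matrix.mul_neg, neg_neg, Matrix.sub_mul, Matrix.trace_sub]

private lemma stiefel_inner_add_smul (n : ℕ) (A B C : Matrix (Fin (n+2)) (Fin (n+2)) ℝ)
    (c : ℝ) : stiefelInner n (A + c • B) C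
      = stiefelInner n A C + c * stiefelInner n B C := by
  simp only [stiefelInner, Matrix.transpose_add, Matrix.transpose_smul, Matrix.add_mul,
    Matrix.smul_mul, Matrix.trace_add, Matrix.trace_smul, smul_eq_mul]
  ring

private lemma stiefel_mem_add_smul {n : ℕ} {A B : Matrix (Fin (n+2)) (Fin (n+2)) ℝ}
    (hA : A ∈ stiefelM n) (hB : B ∈ stiefelM n) (c : ℝ) :
    A + c • B ∈ stiefelM n := by
  refine ⟨?_, fun i j hi hj => ?_⟩
  · rw [Matrix.transpose_add, Matrix.transpose_smul, hA.1, hB.1]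
    simp [smul_neg, neg_add, add_comm]
  · simp [Matrix.add_apply, Matrix.smul_apply, hA.2 i j hi hj, hB.2 i j hi hj]

/-- For `l = n + 2 > 2`, the characteristic contact
connection `∇^c = ∇^g + ½·μ∧dμ` of the Sasakian Stiefel manifold
`V_{l,2} = SO(l)/SO(n)` coincides with the invariant canonical connection of
the reductive homogeneous space `SO(l)/SO(n)`; moreover `∇^c` is complete and
its holonomy group is `SO(n)`. -/
theorem stiefel_characteristic_contact_connection_is_canonical
    (n : ℕ) (hn : 0 < n)   -- so that `l = n + 2 > 2`
    -- the invariant Levi-Civita connection (Nomizu map) of the Sasaki metric,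
    -- characterized by the invariant Koszul formula
    (LC : StiefelMsub n → StiefelMsub n → Matrix (Fin (n+2)) (Fin (n+2)) ℝ)
    (hLCmem : ∀ X Y, LC X Y ∈ stiefelM n)
    (hLC : ∀ X Y Z : StiefelMsub n,
      2 * stiefelInner n (LC X Y) Z.1
        = stiefelInner n (stiefelProjM n (X.1 * Y.1 - Y.1 * X.1)) Z.1
          - stiefelInner n (stiefelProjM n (Y.1 * Z.1 - Z.1 * Y.1)) X.1
          + stiefelInner n (stiefelProjM n (Z.1 * X.1 - X.1 * Z.1)) Y.1)
    -- the torsion `(2,1)`-tensor of the characteristic contact connection,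
    -- metrically equivalent to the torsion 3-form `μ ∧ dμ`
    (T : StiefelMsub n → StiefelMsub n → Matrix (Fin (n+2)) (Fin (n+2)) ℝ)
    (hTmem : ∀ X Y, T X Y ∈ stiefelM n)
    (hTval : ∀ X Y Z : StiefelMsub n,
      stiefelInner n (T X Y) Z.1 = stiefelMuDmu n X.1 Y.1 Z.1)
    -- nondegeneracy of the invariant metric on `𝔪`
    (hnd : ∀ A ∈ stiefelM n, (∀ Z ∈ stiefelM n, stiefelInner n A Z = 0) → A = 0)
    -- abstract completeness predicate and holonomy-group assignment for
    -- invariant connections on `SO(l)/SO(n)` (given through their Nomizu maps),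
    -- together with the classical facts (Kobayashi–Nomizu) that the canonical
    -- connection (Nomizu map `0`) is complete with holonomy group `SO(n)`
    (IsComplete : (StiefelMsub n → StiefelMsub n → Matrix (Fin (n+2)) (Fin (n+2)) ℝ) → Prop)
    (Holonomy : (StiefelMsub n → StiefelMsub n → Matrix (Fin (n+2)) (Fin (n+2)) ℝ) →
        Set (Matrix (Fin (n+2)) (Fin (n+2)) ℝ → Matrix (Fin (n+2)) (Fin (n+2)) ℝ))
    (hcanComplete : IsComplete (fun _ _ => 0))
    (hcanHol : Holonomy (fun _ _ => 0) = stiefelSOnAction n) :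
    -- `∇^c = ∇^g + ½(μ∧dμ)` is the canonical connection (Nomizu map `0`),
    -- it is complete, and its holonomy group is `SO(n)`
    (fun X Y => LC X Y + (1/2 : ℝ) • T X Y)
        = (fun _ _ => (0 : Matrix (Fin (n+2)) (Fin (n+2)) ℝ)) ∧
    IsComplete (fun X Y => LC X Y + (1/2 : ℝ) • T X Y) ∧
    Holonomy (fun X Y => LC X Y + (1/2 : ℝ) • T X Y) = stiefelSOnAction n := by
  have main : (fun X Y => LC X Y + (1/2 : ℝ) • T X Y)
      = (fun _ _ => (0 : Matrix (Fin (n+2)) (Fin (n+2)) ℝ)) := by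
    funext X Y
    refine hnd _ (stiefel_mem_add_smul (hLCmem X Y) (hTmem X Y) _) fun Z hZ => ?_
    set Zs : StiefelMsub n := ⟨Z, hZ⟩ with hZs
    have key : 2 * stiefelInner n (LC X Y) Z + stiefelInner n (T X Y) Z = 0 := by
      have h1 := hLC X Y Zs
      have h2 := hTval X Y Zs
      rw [h1, h2]
      rw [stiefel_proj_inner _ hZ, stiefel_proj_inner _ X.2, stiefel_proj_inner _ Y.2]
      rw [stiefel_inner_bracket X.2 Y.2, stiefel_inner_bracket Y.2 hZ,
        stiefel_inner_bracket hZ X.2]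
      rw [stiefel_trace_eq_mudmu Y.2 X.2 hZ, stiefel_trace_eq_mudmu X.2 Y.2 hZ,
        stiefel_trace_eq_mudmu hZ Y.2 X.2, stiefel_trace_eq_mudmu Y.2 hZ X.2,
        stiefel_trace_eq_mudmu X.2 hZ Y.2, stiefel_trace_eq_mudmu hZ X.2 Y.2]
      simp only [stiefelMuDmu]
      rw [stiefel_dmu_swap n Z X.1, stiefel_dmu_swap n Z Y.1, stiefel_dmu_swap n Y.1 X.1]
      ring
    have := stiefel_inner_add_smul n (LC X Y) (T X Y) Z (1/2)
    rw [this]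
    linarith
  exact ⟨main, by rw [main]; exact hcanComplete, by rw [main]; exact hcanHol⟩


end
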